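/- Let G be a finite group and let M be a left module over the group algebra ℚ[G]. Let π_e : ℚ[G] → ℚ denote the ℚ-linear form assigning to an element of the group algebra its coefficient at the neutral element of G. Then the map sending a ℚ[G]-module homomorphism φ : M → ℚ[G] to the ℚ-linear form π_e ∘ φ : M → ℚ is a ℚ-linear bijection from the space of ℚ[G]-module homomorphisms Hom_{ℚ[G]}(M, ℚ[G]) onto the space of all ℚ-linear forms Hom_ℚ(M, ℚ). -/

import Mathlib

/-- The `ℚ`-linear form on the group algebra `ℚ[G]` given by taking the coefficient
at the neutral element of `G`. -/
noncomputable def coeffAtOne (G : Type*) [Group G] : MonoidAlgebra ℚ G →ₗ[ℚ] ℚ :=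
  Finsupp.lapply (1 : G) ∘ₗ (MonoidAlgebra.coeffLinearEquiv ℚ).toLinearMap

section Aux

variable (G : Type*) [Group G] [Fintype G] (M : Type*) [AddCommGroup M]
    [Module (MonoidAlgebra ℚ G) M] [Module ℚ M] [IsScalarTower ℚ (MonoidAlgebra ℚ G) M]

/-- The inverse map: from a `ℚ`-linear form to a `ℚ[G]`-module map into `ℚ[G]`. -/
noncomputable def invMap (f : M →ₗ[ℚ] ℚ) : M →ₗ[MonoidAlgebra ℚ G] MonoidAlgebra ℚ G where
  toFun m := ∑ g : G, MonoidAlgebra.single g (f ((MonoidAlgebra.single g⁻¹ (1 : ℚ)) • m))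
  map_add' x y := by
    simp [smul_add, map_add, Finsupp.single_add, Finset.sum_add_distrib]
  map_smul' r m := by
    simp only [RingHom.id_apply]
    induction r using MonoidAlgebra.induction_on with
    | of h =>
      rw [MonoidAlgebra.of_apply, Finset.smul_sum,
        ← Equiv.sum_comp (Equiv.mulLeft h) (fun g => (MonoidAlgebra.single g
          (f ((MonoidAlgebra.single g⁻¹ (1 : ℚ)) • MonoidAlgebra.single h (1:ℚ) • m))))]
      refine Finset.sum_congr rfl fun g _ => ?_
      simp only [Equiv.coe_mulLeft]
      rw [smul_smul, MonoidAlgebra.single_mul_single, mul_one, mul_inv_rev,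
        inv_mul_cancel_right,
        show ∀ x y : MonoidAlgebra ℚ G, x • y = x * y from fun _ _ => rfl,
        MonoidAlgebra.single_mul_single, one_mul]
    | add a b ha hb =>
      rw [add_smul, add_smul]
      simp only [smul_add, map_add, MonoidAlgebra.single_add, Finset.sum_add_distrib, ha, hb]
    | smul q a ha =>
      rw [smul_assoc, smul_assoc, ← ha, Finset.smul_sum]
      refine Finset.sum_congr rfl fun g _ => ?_
      rw [smul_comm (MonoidAlgebra.single g⁻¹ (1:ℚ)) q, map_smul, MonoidAlgebra.smul_single]

lemma coeff_invMap (f : M →ₗ[ℚ] ℚ) :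
    (coeffAtOne G).comp ((invMap G M f).restrictScalars ℚ) = f := by
  classical
  ext m
  simp only [LinearMap.comp_apply, LinearMap.restrictScalars_apply, coeffAtOne,
    invMap, LinearMap.coe_mk, AddHom.coe_mk]
  rw [map_sum, map_sum, Finset.sum_eq_single (1 : G)]
  · rw [inv_one, show (MonoidAlgebra.single (1 : G) (1 : ℚ)) = (1 : MonoidAlgebra ℚ G) from rfl,
      one_smul]
    erw [Finsupp.lapply_apply, Finsupp.single_eq_same]
  · intro b _ hb
    simp [Finsupp.single_apply, hb, Ne.symm hb]
  · simp

lemma invMap_coeff (φ : M →ₗ[MonoidAlgebra ℚ G] MonoidAlgebra ℚ G) :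
    invMap G M ((coeffAtOne G).comp (φ.restrictScalars ℚ)) = φ := by
  classical
  refine LinearMap.ext fun m => ?_
  simp only [invMap, LinearMap.coe_mk, AddHom.coe_mk, LinearMap.comp_apply,
    LinearMap.restrictScalars_apply, coeffAtOne, Finsupp.lapply_apply]
  ext a
  rw [MonoidAlgebra.coeff_sum, Finset.sum_apply']
  simp only [MonoidAlgebra.coeff_single, MonoidAlgebra.coeffLinearEquiv_apply]
  rw [Finset.sum_eq_single a]
  · rw [Finsupp.single_eq_same, map_smul, smul_eq_mul]
    rw [LinearEquiv.coe_coe, MonoidAlgebra.coeffLinearEquiv_apply, MonoidAlgebra.coeff_single_mul_apply, one_mul, inv_inv, mul_one]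
  · intro b _ hb
    rw [Finsupp.single_apply, if_neg hb]
  · simp

end Aux

theorem stmt_13 (G : Type*) [Group G] [Fintype G] (M : Type*) [AddCommGroup M]
    [Module (MonoidAlgebra ℚ G) M] [Module ℚ M] [IsScalarTower ℚ (MonoidAlgebra ℚ G) M] :
    IsLinearMap ℚ (fun φ : M →ₗ[MonoidAlgebra ℚ G] MonoidAlgebra ℚ G =>
        (coeffAtOne G).comp (φ.restrictScalars ℚ)) ∧
      Function.Bijective (fun φ : M →ₗ[MonoidAlgebra ℚ G] MonoidAlgebra ℚ G =>
        (coeffAtOne G).comp (φ.restrictScalars ℚ)) := by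
  constructor
  · exact ⟨fun x y => LinearMap.ext fun m => by simp,
      fun c x => LinearMap.ext fun m => by simp⟩
  · exact Function.bijective_iff_has_inverse.mpr
      ⟨invMap G M, fun φ => invMap_coeff G M φ, fun f => coeff_invMap G M f⟩
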